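/- Let H ≤ S_d act transitively on {1,…,d}, and let G = (H^n) ⋊ S_n (the wreath product) act on ℝ^{n×d} by ((h₁,…,h_n,σ)·X)_{ij} = X_{σ⁻¹(i), h_i⁻¹(j)}. Then every linear G-equivariant map L : ℝ^{n×d} → ℝ^{n×d} has the form L(X)_i = L₁(x_i) + β·(Σ_{j=1}^n Σ_{k=1}^d X_{jk})·𝟙_d, where L₁ : ℝ^d → ℝ^d is linear H-equivariant, β ∈ ℝ, and 𝟙_d is the all-ones vector. The dimension of this space is E(H) + 1. -/

import Mathlib

/-- A linear map `M : ℝ^d → ℝ^d` is `H`-equivariant for `H ≤ S_d` acting by permuting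
coordinates. -/
def IsHEquivariant {d : ℕ} (H : Subgroup (Equiv.Perm (Fin d)))
    (M : (Fin d → ℝ) →ₗ[ℝ] (Fin d → ℝ)) : Prop :=
  ∀ h ∈ H, ∀ x : Fin d → ℝ, (M fun j => x (h⁻¹ j)) = fun j => M x (h⁻¹ j)

/-- The submodule of linear endomorphisms of `α → ℝ` that are equivariant with respect to the
permutation action of a subgroup `G` of the symmetric group. -/
noncomputable def equivSubmodule {α : Type*} [Fintype α] [DecidableEq α]
    (G : Subgroup (Equiv.Perm α)) :
    Submodule ℝ ((α → ℝ) →ₗ[ℝ] (α → ℝ)) where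
  carrier := {L | ∀ g ∈ G, ∀ x : α → ℝ, (L fun i => x (g⁻¹ i)) = fun i => L x (g⁻¹ i)}
  add_mem' := by
    intro L M hL hM g hg x
    simp only [LinearMap.add_apply, hL g hg x, hM g hg x]
    rfl
  zero_mem' := by intro g hg x; simp; rfl
  smul_mem' := by
    intro c L hL g hg x
    simp only [LinearMap.smul_apply, hL g hg x]
    rfl

/-- The submodule of linear endomorphisms of `ℝ^{n×d}` equivariant to the wreath product
`G = Hⁿ ⋊ S_n` acting by `((h₁,…,h_n,σ)·X)_{ij} = X_{σ⁻¹(i), h_i⁻¹(j)}`. -/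
noncomputable def wreathSubmodule {n d : ℕ} (H : Subgroup (Equiv.Perm (Fin d))) :
    Submodule ℝ ((Fin n → Fin d → ℝ) →ₗ[ℝ] (Fin n → Fin d → ℝ)) where
  carrier := {L | ∀ (σ : Equiv.Perm (Fin n)) (h : Fin n → Equiv.Perm (Fin d)),
    (∀ i, h i ∈ H) → ∀ X : Fin n → Fin d → ℝ,
    (L fun i => fun j => X (σ⁻¹ i) ((h i)⁻¹ j)) = fun i => fun j => L X (σ⁻¹ i) ((h i)⁻¹ j)}
  add_mem' := by
    intro L M hL hM σ h hh X
    simp only [LinearMap.add_apply, hL σ h hh X, hM σ h hh X]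
    rfl
  zero_mem' := by intro σ h hh X; simp; rfl
  smul_mem' := by
    intro c L hL σ h hh X
    simp only [LinearMap.smul_apply, hL σ h hh X]
    rfl

namespace WreathAux

/-- standard basis "matrix" -/
def stdE {n d : ℕ} (a : Fin n) (b : Fin d) : Fin n → Fin d → ℝ :=
  fun p q => if p = a ∧ q = b then 1 else 0

/-- matrix coefficients of a linear endomorphism of ℝ^{n×d} -/
def cc {n d : ℕ} (L : (Fin n → Fin d → ℝ) →ₗ[ℝ] (Fin n → Fin d → ℝ))
    (i : Fin n) (j : Fin d) (a : Fin n) (b : Fin d) : ℝ :=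
  L (stdE a b) i j

lemma expand {n d : ℕ} (L : (Fin n → Fin d → ℝ) →ₗ[ℝ] (Fin n → Fin d → ℝ))
    (X : Fin n → Fin d → ℝ) (i : Fin n) (j : Fin d) :
    L X i j = ∑ a, ∑ b, X a b * cc L i j a b := by
  have hX : X = ∑ a, ∑ b, X a b • stdE a b := by
    funext p q
    simp [stdE, Finset.sum_apply, ite_and, Finset.sum_ite_eq, Finset.sum_ite_eq',
      mul_ite, mul_one, mul_zero]
  conv_lhs => rw [hX]
  simp [cc, map_sum, Finset.sum_apply]

variable {n d : ℕ} {H : Subgroup (Equiv.Perm (Fin d))}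
  {L : (Fin n → Fin d → ℝ) →ₗ[ℝ] (Fin n → Fin d → ℝ)}

lemma row_inv (hL : L ∈ wreathSubmodule (n := n) H) (σ : Equiv.Perm (Fin n))
    (i : Fin n) (j : Fin d) (a : Fin n) (b : Fin d) :
    cc L (σ i) j (σ a) b = cc L i j a b := by
  have key := hL σ (fun _ => 1) (fun _ => H.one_mem) (stdE a b)
  simp only [inv_one, Equiv.Perm.one_apply] at key
  have harg : (fun (p : Fin n) (q : Fin d) => stdE a b (σ⁻¹ p) q) = stdE (σ a) b := by
    funext p q
    simp [stdE, Equiv.Perm.inv_eq_iff_eq, Equiv.symm_apply_eq]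
  rw [harg] at key
  have := congrFun (congrFun key (σ i)) j
  simpa [cc, Equiv.symm_apply_apply] using this

lemma col_inv (hL : L ∈ wreathSubmodule (n := n) H) {g : Equiv.Perm (Fin d)} (hg : g ∈ H)
    (r i : Fin n) (j : Fin d) (a : Fin n) (b : Fin d) :
    cc L i j a ((if a = r then g else 1) b)
      = cc L i (((if i = r then g else 1) : Equiv.Perm (Fin d))⁻¹ j) a b := by
  have hmem : ∀ p : Fin n, (if p = r then g else 1) ∈ H := by
    intro p; split
    · exact hg
    · exact H.one_mem
  have key := hL 1 (fun p => if p = r then g else 1) hmem (stdE a b)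
  simp only [inv_one, Equiv.Perm.one_apply] at key
  have harg : (fun (p : Fin n) (q : Fin d) =>
        stdE a b p (((if p = r then g else 1) : Equiv.Perm (Fin d))⁻¹ q))
      = stdE a ((if a = r then g else 1 : Equiv.Perm (Fin d)) b) := by
    funext p q
    by_cases hpa : p = a
    · subst hpa
      simp [stdE, Equiv.Perm.inv_eq_iff_eq, Equiv.symm_apply_eq]
    · simp [stdE, hpa]
  rw [harg] at key
  exact congrFun (congrFun key i) j

lemma colC1 (hL : L ∈ wreathSubmodule (n := n) H) {g : Equiv.Perm (Fin d)} (hg : g ∈ H)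
    {i a : Fin n} (hia : i ≠ a) (j b : Fin d) :
    cc L i j a (g b) = cc L i j a b := by
  have := col_inv hL hg a i j a b
  simpa [hia] using this

lemma colC2 (hL : L ∈ wreathSubmodule (n := n) H) {g : Equiv.Perm (Fin d)} (hg : g ∈ H)
    (i : Fin n) (j b : Fin d) :
    cc L i j i (g b) = cc L i (g⁻¹ j) i b := by
  simpa using col_inv hL hg i i j i b

lemma colC3 (hL : L ∈ wreathSubmodule (n := n) H) {g : Equiv.Perm (Fin d)} (hg : g ∈ H)
    {i a : Fin n} (hia : i ≠ a) (j b : Fin d) :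
    cc L i (g⁻¹ j) a b = cc L i j a b := by
  have := col_inv hL hg i i j a b
  simpa [Ne.symm hia] using this.symm


lemma diag_cc (hL : L ∈ wreathSubmodule (n := n) H) (i0 i : Fin n) (j : Fin d) (b : Fin d) :
    cc L i j i b = cc L i0 j i0 b := by
  have := row_inv hL (Equiv.swap i0 i) i0 j i0 b
  simpa [Equiv.swap_apply_left] using this

lemma wreath_char (hn : 2 ≤ n) (hd : 0 < d)
    (htrans : ∀ j k : Fin d, ∃ h ∈ H, h j = k)
    (hL : L ∈ wreathSubmodule (n := n) H) :
    ∃ (L₁ : (Fin d → ℝ) →ₗ[ℝ] (Fin d → ℝ)) (β : ℝ), L₁ ∈ equivSubmodule H ∧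
      ∀ (X : Fin n → Fin d → ℝ) (i : Fin n) (j : Fin d),
        L X i j = L₁ (X i) j + β * ∑ a : Fin n, ∑ b : Fin d, X a b := by
  have hd2 := hd
  set i0 : Fin n := ⟨0, by omega⟩ with hi0def
  set i1 : Fin n := ⟨1, by omega⟩ with hi1def
  have hi01 : i0 ≠ i1 := by simp [hi0def, hi1def, Fin.ext_iff]
  set j0 : Fin d := ⟨0, hd⟩ with hj0def
  set β : ℝ := cc L i0 j0 i1 j0 with hβ
  -- off-diagonal coefficients are all equal to β
  have offdiag : ∀ (i a : Fin n), i ≠ a → ∀ (j : Fin d) (b : Fin d), cc L i j a b = β := by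
    intro i a hia j b
    obtain ⟨g, hg, hgj⟩ := htrans j j0
    have hginv : g⁻¹ j0 = j := by rw [← hgj]; simp
    have s1 : cc L i j a b = cc L i j0 a b := by
      have h2 := colC3 hL hg hia j0 b
      rwa [hginv] at h2
    obtain ⟨g', hg', hgb⟩ := htrans j0 b
    have s2 : cc L i j0 a b = cc L i j0 a j0 := by
      have h2 := colC1 hL hg' hia j0 j0
      rwa [hgb] at h2
    set a' : Fin n := Equiv.swap i0 i a with ha'
    have ha'0 : a' ≠ i0 := by
      rw [ha']
      intro hh
      have h3 : a = i := by
        have h4 := congrArg (Equiv.swap i0 i) hh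
        simpa [Equiv.swap_apply_self, Equiv.swap_apply_left] using h4
      exact hia h3.symm
    have e0 : (Equiv.swap i0 i * Equiv.swap i1 a') i0 = i := by
      simp [Equiv.Perm.mul_apply,
        Equiv.swap_apply_of_ne_of_ne hi01 (Ne.symm ha'0), Equiv.swap_apply_left]
    have e1 : (Equiv.swap i0 i * Equiv.swap i1 a') i1 = a := by
      simp [Equiv.Perm.mul_apply, Equiv.swap_apply_left, ha', Equiv.swap_apply_self]
    have s3 : cc L i j0 a j0 = β := by
      have h5 := row_inv hL (Equiv.swap i0 i * Equiv.swap i1 a') i0 j0 i1 j0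
      rw [e0, e1] at h5
      exact h5
    exact s1.trans (s2.trans s3)
  -- the row map
  refine ⟨{ toFun := fun x j => ∑ b, (cc L i0 j i0 b - β) * x b
            map_add' := by
              intro x y; funext j
              simp [mul_add, Finset.sum_add_distrib]
            map_smul' := by
              intro r x; funext j
              simp only [Pi.smul_apply, smul_eq_mul, RingHom.id_apply]
              rw [Finset.mul_sum]
              exact Finset.sum_congr rfl fun b _ => by ring }, β, ?_, ?_⟩
  · -- H-equivariance
    intro g hg x
    funext j
    show ∑ b, (cc L i0 j i0 b - β) * x (g⁻¹ b) = ∑ b, (cc L i0 (g⁻¹ j) i0 b - β) * x b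
    refine (Fintype.sum_equiv g (fun b => (cc L i0 (g⁻¹ j) i0 b - β) * x b)
      (fun b => (cc L i0 j i0 b - β) * x (g⁻¹ b)) fun b => ?_).symm
    show (cc L i0 (g⁻¹ j) i0 b - β) * x b = (cc L i0 j i0 (g b) - β) * x (g⁻¹ (g b))
    rw [← colC2 hL hg i0 j b, Equiv.Perm.inv_def, Equiv.symm_apply_apply]
  · -- the formula
    intro X i j
    rw [expand L X i j]
    show _ = (∑ b, (cc L i0 j i0 b - β) * X i b) + β * ∑ a : Fin n, ∑ b : Fin d, X a b
    have key : ∀ (a : Fin n) (b : Fin d),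
        X a b * cc L i j a b
          = X a b * β + (if a = i then X a b * (cc L i0 j i0 b - β) else 0) := by
      intro a b
      by_cases hai : a = i
      · subst hai
        rw [diag_cc hL i0 a j b]
        simp; ring
      · rw [offdiag i a (fun h => hai h.symm) j b]
        simp [hai]
    calc ∑ a, ∑ b, X a b * cc L i j a b
        = ∑ a, ∑ b, (X a b * β + (if a = i then X a b * (cc L i0 j i0 b - β) else 0)) := by
          exact Finset.sum_congr rfl fun a _ => Finset.sum_congr rfl fun b _ => key a b
      _ = (∑ a, ∑ b, X a b * β)
            + ∑ a, ∑ b, (if a = i then X a b * (cc L i0 j i0 b - β) else 0) := by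
          rw [← Finset.sum_add_distrib]
          exact Finset.sum_congr rfl fun a _ => by rw [← Finset.sum_add_distrib]
      _ = (∑ b, (cc L i0 j i0 b - β) * X i b) + β * ∑ a : Fin n, ∑ b : Fin d, X a b := by
          have h6 : ∀ a : Fin n, (∑ b, (if a = i then X a b * (cc L i0 j i0 b - β) else 0))
              = if a = i then ∑ b, X a b * (cc L i0 j i0 b - β) else 0 := by
            intro a; split <;> simp
          rw [Finset.sum_congr rfl fun a _ => h6 a, Finset.sum_ite_eq' Finset.univ i]
          simp only [Finset.mem_univ, if_true]
          rw [Finset.mul_sum]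
          rw [add_comm]
          congr 1
          · exact Finset.sum_congr rfl fun b _ => by ring
          · exact Finset.sum_congr rfl fun a _ => by
              rw [Finset.mul_sum]
              exact Finset.sum_congr rfl fun b _ => by ring

lemma sum_stdE {n d : ℕ} (a : Fin n) (b : Fin d) : ∑ p, ∑ q, stdE a b p q = 1 := by
  simp [stdE, ite_and, Finset.sum_ite_eq, Finset.sum_ite_eq']

lemma stdE_apply_ne {n d : ℕ} {a p : Fin n} (b : Fin d) (h : p ≠ a) :
    stdE a b p = 0 := by
  funext q; simp [stdE, h]

noncomputable def psiFun {n d : ℕ} (M : (Fin d → ℝ) →ₗ[ℝ] (Fin d → ℝ)) (β : ℝ) :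
    (Fin n → Fin d → ℝ) →ₗ[ℝ] (Fin n → Fin d → ℝ) where
  toFun X := fun i j => M (X i) j + β * ∑ a, ∑ b, X a b
  map_add' X Y := by
    funext i j
    simp [Pi.add_apply, map_add, Finset.sum_add_distrib]
    ring
  map_smul' r X := by
    funext i j
    have h1 : (∑ a, ∑ b, (r • X) a b) = r * ∑ a, ∑ b, X a b := by
      rw [Finset.mul_sum]
      refine Finset.sum_congr rfl fun a _ => ?_
      rw [Finset.mul_sum]
      exact Finset.sum_congr rfl fun b _ => rfl
    show M ((r • X) i) j + β * ∑ a, ∑ b, (r • X) a b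
        = r * (M (X i) j + β * ∑ a, ∑ b, X a b)
    rw [h1]
    have h2 : M ((r • X) i) j = r * M (X i) j := by
      rw [Pi.smul_apply, map_smul]; rfl
    rw [h2]; ring

lemma psiFun_mem {n d : ℕ} {H : Subgroup (Equiv.Perm (Fin d))}
    {M : (Fin d → ℝ) →ₗ[ℝ] (Fin d → ℝ)} (hM : M ∈ equivSubmodule H) (β : ℝ) :
    psiFun (n := n) M β ∈ wreathSubmodule (n := n) H := by
  intro σ h hh X
  funext i j
  show M (fun j' => X (σ⁻¹ i) ((h i)⁻¹ j')) j + β * ∑ a, ∑ b, X (σ⁻¹ a) ((h a)⁻¹ b)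
      = M (X (σ⁻¹ i)) ((h i)⁻¹ j) + β * ∑ a, ∑ b, X a b
  congr 1
  · exact congrFun (hM (h i) (hh i) (X (σ⁻¹ i))) j
  · congr 1
    calc ∑ a, ∑ b, X (σ⁻¹ a) ((h a)⁻¹ b)
        = ∑ a, ∑ b, X (σ⁻¹ a) b :=
          Finset.sum_congr rfl fun a _ => Equiv.sum_comp (h a)⁻¹ (X (σ⁻¹ a))
      _ = ∑ a, ∑ b, X a b := Equiv.sum_comp σ⁻¹ (fun a => ∑ b, X a b)

end WreathAux

/-- **Equivariant layers for the wreath product action.** If `H ≤ S_d` acts transitively on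
`{1,…,d}` and `n ≥ 2`, `d ≥ 1`, then every linear map `L : ℝ^{n×d} → ℝ^{n×d}` equivariant to
the wreath product `Hⁿ ⋊ S_n` has the form
`L(X)ᵢ = L₁(xᵢ) + β (∑_{j,k} X_{jk}) 𝟙_d` with `L₁` linear `H`-equivariant and `β ∈ ℝ`;
moreover, the space of such equivariant maps has dimension `E(H) + 1`. -/
theorem wreath_equivariant_characterization {n d : ℕ} (hn : 2 ≤ n) (hd : 0 < d)
    (H : Subgroup (Equiv.Perm (Fin d)))
    (htrans : ∀ j k : Fin d, ∃ h ∈ H, h j = k) :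
    (∀ L ∈ wreathSubmodule (n := n) H,
      ∃ (L₁ : (Fin d → ℝ) →ₗ[ℝ] (Fin d → ℝ)) (β : ℝ), IsHEquivariant H L₁ ∧
        ∀ (X : Fin n → Fin d → ℝ) (i : Fin n) (j : Fin d),
          L X i j = L₁ (X i) j + β * ∑ a : Fin n, ∑ b : Fin d, X a b) ∧
      Module.finrank ℝ (wreathSubmodule (n := n) H) =
        Module.finrank ℝ (equivSubmodule H) + 1 := by
  constructor
  · intro L hL
    obtain ⟨L₁, β, hmem, hform⟩ := WreathAux.wreath_char hn hd htrans hL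
    exact ⟨L₁, β, hmem, hform⟩
  · set Ψ : (↥(equivSubmodule H) × ℝ) →ₗ[ℝ] ↥(wreathSubmodule (n := n) H) :=
      { toFun := fun p => ⟨WreathAux.psiFun p.1.1 p.2, WreathAux.psiFun_mem p.1.2 p.2⟩
        map_add' := by
          intro p q
          apply Subtype.ext
          apply LinearMap.ext; intro X
          funext i j
          show WreathAux.psiFun (p.1.1 + q.1.1) (p.2 + q.2) X i j
            = WreathAux.psiFun p.1.1 p.2 X i j + WreathAux.psiFun q.1.1 q.2 X i j
          simp [WreathAux.psiFun]
          ring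
        map_smul' := by
          intro r p
          apply Subtype.ext
          apply LinearMap.ext; intro X
          funext i j
          show WreathAux.psiFun (r • p.1.1) (r • p.2) X i j
            = r • WreathAux.psiFun p.1.1 p.2 X i j
          simp [WreathAux.psiFun]
          ring } with hΨ
    have hinj : Function.Injective Ψ := by
      rw [injective_iff_map_eq_zero]
      rintro ⟨⟨M, hM⟩, β⟩ hp
      have hp' : ∀ (X : Fin n → Fin d → ℝ) (i : Fin n) (j : Fin d),
          M (X i) j + β * ∑ a, ∑ b, X a b = 0 := by
        intro X i j
        have h1 : (WreathAux.psiFun M β : (Fin n → Fin d → ℝ) →ₗ[ℝ] _) = 0 :=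
          congrArg Subtype.val hp
        have := congrFun (congrFun (LinearMap.congr_fun h1 X) i) j
        simpa [WreathAux.psiFun] using this
      have h01 : (⟨0, by omega⟩ : Fin n) ≠ ⟨1, by omega⟩ := by simp [Fin.ext_iff]
      have hβ : β = 0 := by
        have := hp' (WreathAux.stdE ⟨1, by omega⟩ ⟨0, hd⟩) ⟨0, by omega⟩ ⟨0, hd⟩
        rwa [WreathAux.stdE_apply_ne _ h01, WreathAux.sum_stdE, map_zero, mul_one,
          Pi.zero_apply, zero_add] at this
      have hM0 : M = 0 := by
        apply LinearMap.ext; intro x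
        funext j
        have := hp' (fun _ => x) ⟨0, by omega⟩ j
        simpa [hβ] using this
      exact Prod.ext (Subtype.ext hM0) hβ
    have hsurj : Function.Surjective Ψ := by
      rintro ⟨L, hL⟩
      obtain ⟨L₁, β, hmem, hform⟩ := WreathAux.wreath_char hn hd htrans hL
      refine ⟨(⟨L₁, hmem⟩, β), ?_⟩
      apply Subtype.ext
      apply LinearMap.ext; intro X
      funext i j
      exact (hform X i j).symm
    have e : (↥(equivSubmodule H) × ℝ) ≃ₗ[ℝ] ↥(wreathSubmodule (n := n) H) :=
      LinearEquiv.ofBijective Ψ ⟨hinj, hsurj⟩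
    have h2 : Module.finrank ℝ (↥(equivSubmodule H) × ℝ)
        = Module.finrank ℝ (equivSubmodule H) + 1 := by
      haveI := Module.Free.of_divisionRing ℝ ↥(equivSubmodule H)
      rw [Module.finrank_prod, Module.finrank_self]
    have h3 : Module.finrank ℝ (↥(equivSubmodule H) × ℝ)
        = Module.finrank ℝ ↥(wreathSubmodule (n := n) H) := LinearEquiv.finrank_eq e
    rw [← h3, h2]
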